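/- Let H be a complex Hilbert space and A : H →L[ℂ] H a bounded self-adjoint operator whose real spectrum is contained in [1, ∞). Then for every real α > 0 and every u ∈ H, the function s ↦ s^(2α−1)·‖cfc (fun x : ℝ => Real.exp (−s*x)) A u‖² is integrable on (0,∞) and ‖cfc (fun x : ℝ => x^(−α)) A u‖² = (2^(2α) / Γ(2α)) · ∫₀^∞ s^(2α−1) · ‖cfc (fun x : ℝ => Real.exp (−s*x)) A u‖² ds. (This is identity (0.1) of the paper, expressing the negative-power norm of A through the heat semigroup e^{−sA}, stated for a bounded self-adjoint operator A ≥ I.) -/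

import Mathlib

open MeasureTheory Real

lemma aux_gamma {p b : ℝ} (hp : 0 < p) (hb : 0 < b) :
    ∫ s in Set.Ioi (0:ℝ), s ^ (p-1) * Real.exp (-(b*s)) = Real.Gamma p * b ^ (-p) := by
  have h := integral_rpow_mul_exp_neg_mul_rpow (p := 1) (q := p - 1) (b := b)
    one_pos (by linarith) hb
  simp only [Real.rpow_one] at h
  have h2 : ∀ s : ℝ, s ^ (p-1) * Real.exp (-(b*s)) = s ^ (p-1) * Real.exp (-b*s) := by
    intro s; ring_nf
  simp_rw [h2, h]
  rw [show -(p-1+1)/1 = -p by ring, show (p-1+1)/1 = p by ring]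
  ring

set_option maxHeartbeats 1000000 in
theorem stmt_0 {H : Type*} [NormedAddCommGroup H] [InnerProductSpace ℂ H]
    [CompleteSpace H] (A : H →L[ℂ] H) (hA : IsSelfAdjoint A)
    (hspec : spectrum ℝ A ⊆ Set.Ici (1 : ℝ)) (α : ℝ) (hα : 0 < α) (u : H) :
    IntegrableOn
      (fun s : ℝ => s ^ (2 * α - 1) * ‖cfc (fun x : ℝ => Real.exp (-s * x)) A u‖ ^ 2)
      (Set.Ioi (0 : ℝ)) ∧
    ‖cfc (fun x : ℝ => x ^ (-α)) A u‖ ^ 2 =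
      ((2 : ℝ) ^ (2 * α) / Real.Gamma (2 * α)) *
        ∫ s in Set.Ioi (0 : ℝ),
          s ^ (2 * α - 1) * ‖cfc (fun x : ℝ => Real.exp (-s * x)) A u‖ ^ 2 := by
  set β := 2 * α with hβdef
  have hβ : 0 < β := by positivity
  set K := spectrum ℝ A with hKdef
  have hKpos : ∀ x : K, (1:ℝ) ≤ (x:ℝ) := fun x => hspec x.2
  let Φ : C(ℝ × K, ℝ) := ⟨fun p => Real.exp (-(2*p.1) * (p.2 : ℝ)), by fun_prop⟩
  let F : ℝ → C(K, ℝ) := fun s => s ^ (β - 1) • Φ.curry s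
  have hFcont : ContinuousOn F (Set.Ioi 0) := by
    refine ContinuousOn.smul (f := fun s : ℝ => s ^ (β - 1)) (g := fun s => Φ.curry s) ?_ ?_
    · exact fun s hs => (Real.continuousAt_rpow_const s (β-1)
        (Or.inl (ne_of_gt hs))).continuousWithinAt
    · exact Φ.curry.continuous.continuousOn
  have hFmeas : AEStronglyMeasurable F (volume.restrict (Set.Ioi 0)) :=
    hFcont.aestronglyMeasurable measurableSet_Ioi
  have hdom : IntegrableOn (fun s : ℝ => s ^ (β-1) * Real.exp (-(2:ℝ) * s)) (Set.Ioi 0) := by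
    have h := integrableOn_rpow_mul_exp_neg_mul_rpow (p := 1) (s := β - 1) (b := 2)
      (by linarith) one_pos two_pos
    simpa only [Real.rpow_one] using h
  have hFbound : ∀ s ∈ Set.Ioi (0:ℝ), ‖F s‖ ≤ s ^ (β-1) * Real.exp (-(2:ℝ) * s) := by
    intro s hs
    have hs0 : (0:ℝ) < s := hs
    refine le_trans (norm_smul_le (s ^ (β - 1)) (Φ.curry s)) ?_
    rw [Real.norm_of_nonneg (Real.rpow_nonneg hs0.le _)]
    gcongr
    refine ContinuousMap.norm_le _ (Real.exp_nonneg _) |>.mpr fun x => ?_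
    show ‖Real.exp (-(2*s) * (x:ℝ))‖ ≤ _
    rw [Real.norm_of_nonneg (Real.exp_nonneg _)]
    apply Real.exp_le_exp.mpr
    have := hKpos x
    nlinarith
  have hFint : IntegrableOn F (Set.Ioi 0) := by
    refine Integrable.mono' hdom hFmeas ?_
    filter_upwards [ae_restrict_mem measurableSet_Ioi] with s hs using hFbound s hs
  have hcontβ : ContinuousOn (fun x : ℝ => x ^ (-β)) (spectrum ℝ A) := by
    intro x hx
    have hx1 : (1:ℝ) ≤ x := hspec hx
    exact (Real.continuousAt_rpow_const x (-β)
      (Or.inl (by linarith))).continuousWithinAt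
  have hcontα : ContinuousOn (fun x : ℝ => x ^ (-α)) (spectrum ℝ A) := by
    intro x hx
    have hx1 : (1:ℝ) ≤ x := hspec hx
    exact (Real.continuousAt_rpow_const x (-α)
      (Or.inl (by linarith))).continuousWithinAt
  let g : C(K, ℝ) := ⟨fun x => (x:ℝ) ^ (-β), ContinuousOn.restrict hcontβ⟩
  have hval : ∫ s in Set.Ioi (0:ℝ), F s = (Real.Gamma β * (2:ℝ) ^ (-β)) • g := by
    ext x
    have hx1 : (1:ℝ) ≤ (x:ℝ) := hKpos x
    have hev' : ∫ s in Set.Ioi (0:ℝ), (F s) x = (∫ s in Set.Ioi (0:ℝ), F s) x :=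
      (ContinuousMap.evalCLM ℝ x).integral_comp_comm hFint
    have hpt : ∀ s : ℝ, (F s) x = s ^ (β-1) * Real.exp (-((2*(x:ℝ))*s)) := by
      intro s
      show s ^ (β-1) * Real.exp (-(2*s) * (x:ℝ)) = _
      ring_nf
    have hgam := aux_gamma hβ (by linarith : (0:ℝ) < 2*(x:ℝ))
    have h1 : (∫ s in Set.Ioi (0:ℝ), F s) x = Real.Gamma β * (2*(x:ℝ)) ^ (-β) := by
      rw [← hev']
      simp_rw [hpt]
      exact hgam
    rw [ContinuousMap.smul_apply, h1,
      Real.mul_rpow (by norm_num) (by linarith : (0:ℝ) ≤ (x:ℝ))]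
    show Real.Gamma β * ((2:ℝ)^(-β) * (x:ℝ)^(-β)) = (Real.Gamma β * (2:ℝ)^(-β)) * ((x:ℝ)^(-β))
    ring
  let L : C(K, ℝ) →L[ℝ] (H →L[ℂ] H) :=
    { toLinearMap := (cfcHom (R := ℝ) hA).toLinearMap,
      cont := (cfcHom_isClosedEmbedding (R := ℝ) hA).continuous }
  let φ : (H →L[ℂ] H) →L[ℝ] ℝ :=
    Complex.reCLM.comp (((innerSL ℂ u).comp ((ContinuousLinearMap.apply ℂ H) u)).restrictScalars ℝ)
  have hφ : ∀ T : H →L[ℂ] H, φ T = Complex.re (inner ℂ u (T u)) := fun T => rfl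
  have hsq : ∀ f : ℝ → ℝ, ContinuousOn f (spectrum ℝ A) →
      φ (cfc (fun x => f x * f x) A) = ‖cfc f A u‖ ^ 2 := by
    intro f hf
    have hmul := cfc_mul f f A hf hf
    set T := cfc f A with hT
    have hTsa : IsSelfAdjoint T := cfc_predicate f A
    rw [hmul, hφ]
    have h := ContinuousLinearMap.adjoint_inner_left T u (T u)
    rw [hTsa.adjoint_eq] at h
    -- h : inner (T u) (T u) = inner (T (T u)) u
    have hadj : (inner ℂ u (T (T u)) : ℂ) = inner ℂ (T u) (T u) :=
      calc (inner ℂ u (T (T u)) : ℂ) = starRingEnd ℂ (inner ℂ (T (T u)) u : ℂ) :=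
            (inner_conj_symm u (T (T u))).symm
        _ = starRingEnd ℂ (inner ℂ (T u) (T u) : ℂ) := by rw [h]
        _ = inner ℂ (T u) (T u) := inner_self_conj _
    rw [ContinuousLinearMap.mul_apply, hadj]
    exact inner_self_eq_norm_sq (𝕜 := ℂ) (T u)
  have hkey : ∀ s ∈ Set.Ioi (0:ℝ),
      φ (L (F s)) = s ^ (β-1) * ‖cfc (fun x : ℝ => Real.exp (-s * x)) A u‖ ^ 2 := by
    intro s _
    have hc2 : ContinuousOn (fun x : ℝ => Real.exp (-(2*s)*x)) (spectrum ℝ A) := by fun_prop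
    have hLc : L (Φ.curry s) = cfc (fun x : ℝ => Real.exp (-(2*s)*x)) A := by
      rw [cfc_apply _ A hA hc2]
      rfl
    have hLF : φ (L (F s)) = s^(β-1) * φ (cfc (fun x : ℝ => Real.exp (-(2*s)*x)) A) := by
      show φ (L (s ^ (β - 1) • Φ.curry s)) = _
      rw [L.map_smul, hLc, φ.map_smul, smul_eq_mul]
    rw [hLF]
    congr 1
    have heq : (spectrum ℝ A).EqOn (fun x : ℝ => Real.exp (-(2*s)*x))
        (fun x : ℝ => Real.exp (-s*x) * Real.exp (-s*x)) := by
      intro x _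
      simp only
      rw [← Real.exp_add]
      ring_nf
    rw [cfc_congr heq]
    exact hsq (fun x : ℝ => Real.exp (-s*x)) (by fun_prop)
  constructor
  · have h1 : Integrable (fun s => (φ.comp L) (F s)) (volume.restrict (Set.Ioi 0)) :=
      (φ.comp L).integrable_comp hFint
    refine h1.congr ?_
    filter_upwards [ae_restrict_mem measurableSet_Ioi] with s hs using hkey s hs
  · have hIeq : ∫ s in Set.Ioi (0:ℝ),
        s ^ (β-1) * ‖cfc (fun x : ℝ => Real.exp (-s * x)) A u‖ ^ 2
        = (φ.comp L) (∫ s in Set.Ioi (0:ℝ), F s) := by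
      rw [← (φ.comp L).integral_comp_comm hFint]
      exact setIntegral_congr_fun measurableSet_Ioi fun s hs => (hkey s hs).symm
    have hgval : φ (L g) = ‖cfc (fun x : ℝ => x ^ (-α)) A u‖ ^ 2 := by
      have hLg : L g = cfc (fun x : ℝ => x ^ (-β)) A := by
        rw [cfc_apply _ A hA hcontβ]
        rfl
      rw [hLg]
      have heq : (spectrum ℝ A).EqOn (fun x : ℝ => x ^ (-β))
          (fun x : ℝ => x ^ (-α) * x ^ (-α)) := by
        intro x hx
        have hx1 : (1:ℝ) ≤ x := hspec hx
        simp only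
        rw [← Real.rpow_add (by linarith)]
        ring_nf
        rw [hβdef]
        ring_nf
      rw [cfc_congr heq]
      exact hsq _ hcontα
    rw [hIeq, hval, (φ.comp L).map_smul, smul_eq_mul]
    have hcoef : (2:ℝ)^β / Real.Gamma β * (Real.Gamma β * (2:ℝ)^(-β)) = 1 := by
      have hΓ : Real.Gamma β ≠ 0 := (Real.Gamma_pos_of_pos hβ).ne'
      have h2 : (2:ℝ)^β * (2:ℝ)^(-β) = 1 := by
        rw [← Real.rpow_add two_pos]; simp
      calc (2:ℝ)^β / Real.Gamma β * (Real.Gamma β * (2:ℝ)^(-β))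
          = ((2:ℝ)^β * (2:ℝ)^(-β)) * (Real.Gamma β / Real.Gamma β) := by ring
        _ = 1 := by rw [h2, div_self hΓ, one_mul]
    show ‖cfc (fun x : ℝ => x ^ (-α)) A u‖ ^ 2
      = (2:ℝ)^β / Real.Gamma β * (Real.Gamma β * (2:ℝ)^(-β) * (φ.comp L) g)
    rw [← mul_assoc, hcoef, one_mul]
    exact hgval.symm
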